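/- If P is a finitely generated torsion-free commutative cancellative monoid and N is a finitely generated combinatorial ℤ[P]-module, then N has a filtration 0 = N₀ ⊂ N₁ ⊂ ⋯ ⊂ N_n = N with each Nᵢ/Nᵢ₋₁ ≅ ℤ[P]/(K) for some prime ideal K ⊂ P. -/

import Mathlib

open AddMonoidAlgebra

/-- `ℤ[P] → ℤ[P^gp]` makes the group algebra an algebra over the monoid algebra. -/
noncomputable instance monoidAlgebraTowerAlgebra {G : Type*} [AddCommGroup G]
    (P : AddSubmonoid G) : Algebra (AddMonoidAlgebra ℤ ↥P) (AddMonoidAlgebra ℤ G) :=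
  (AddMonoidAlgebra.mapDomainRingHom ℤ P.subtype).toAlgebra

/-- A sub-`P`-set of `P^gp`: a subset `A ⊆ G` with `P + A = A`. -/
def IsSubPSet {G : Type*} [AddCommGroup G] (P : AddSubmonoid G) (A : Set G) : Prop :=
  ∀ p ∈ P, ∀ a ∈ A, p + a ∈ A

/-- The `ℤ[P]`-submodule `(A)` of `ℤ[P^gp]` spanned by the monomials `t^a`, `a ∈ A`. -/
noncomputable def monomialSpan {G : Type*} [AddCommGroup G] (P : AddSubmonoid G)
    (A : Set G) : Submodule (AddMonoidAlgebra ℤ ↥P) (AddMonoidAlgebra ℤ G) :=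
  Submodule.span (AddMonoidAlgebra ℤ ↥P)
    ((fun a : G => (AddMonoidAlgebra.single a 1 : AddMonoidAlgebra ℤ G)) '' A)

/-- The monomial ideal `(K)` of `ℤ[P]` generated by `t^k`, `k ∈ K ⊆ P`. -/
noncomputable def monomialIdeal {G : Type*} [AddCommGroup G] (P : AddSubmonoid G)
    (K : Set G) : Ideal (AddMonoidAlgebra ℤ ↥P) :=
  Ideal.span ((fun p : ↥P => (AddMonoidAlgebra.single p 1 : AddMonoidAlgebra ℤ ↥P)) ''
    {p : ↥P | (p : G) ∈ K})

/-- `K` is a prime ideal of the monoid `P` (as a subset of `G`): a proper ideal of `P`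
such that `p + q ∈ K` implies `p ∈ K` or `q ∈ K`.  The empty ideal is allowed. -/
def IsMonoidPrime {G : Type*} [AddCommGroup G] (P : AddSubmonoid G) (K : Set G) : Prop :=
  K ⊆ (P : Set G) ∧ (∀ p ∈ P, ∀ k ∈ K, p + k ∈ K) ∧ K ≠ (P : Set G) ∧
    ∀ p ∈ P, ∀ q ∈ P, p + q ∈ K → p ∈ K ∨ q ∈ K

section Aux
variable {G : Type*} [AddCommGroup G] (P : AddSubmonoid G)

/-- Identity cast from `G →₀ ℤ` to the monoid algebra. -/
def castMA {G' : Type*} (f : G' →₀ ℤ) : AddMonoidAlgebra ℤ G' := AddMonoidAlgebra.ofCoeff f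

@[simp] theorem castMA_apply {G' : Type*} (f : G' →₀ ℤ) (g : G') : (castMA f).coeff g = f g := rfl

theorem castMA_zero {G' : Type*} : castMA (0 : G' →₀ ℤ) = 0 := rfl

theorem castMA_add {G' : Type*} (f g : G' →₀ ℤ) : castMA (f + g) = castMA f + castMA g := rfl

theorem castMA_support {G' : Type*} (f : G' →₀ ℤ) : (castMA f).coeff.support = f.support := rfl

theorem castMA_single_mul {G' : Type*} [Add G'] (x y : G') (b b' : ℤ) :
    castMA (Finsupp.single x b) * castMA (Finsupp.single y b')
      = castMA (Finsupp.single (x + y) (b * b')) :=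
  AddMonoidAlgebra.single_mul_single x y b b'

theorem pset_smul_def (r : AddMonoidAlgebra ℤ ↥P) (x : AddMonoidAlgebra ℤ G) :
    r • x = castMA (Finsupp.mapDomain (P.subtype) r.coeff) * x := rfl

theorem pset_smul_single (r : AddMonoidAlgebra ℤ ↥P) (a : G) :
    r • castMA (Finsupp.single a 1)
      = castMA (Finsupp.mapDomain (fun p : ↥P => (p : G) + a) r.coeff) := by
  induction r using AddMonoidAlgebra.induction_linear with
  | zero =>
      rw [AddMonoidAlgebra.coeff_zero, Finsupp.mapDomain_zero, castMA_zero]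
      exact zero_smul _ _
  | add f g hf hg =>
      rw [add_smul, hf, hg, AddMonoidAlgebra.coeff_add, Finsupp.mapDomain_add, castMA_add]
  | single p c =>
      rw [pset_smul_def, AddMonoidAlgebra.coeff_single, Finsupp.mapDomain_single,
        Finsupp.mapDomain_single]
      rw [show castMA (Finsupp.single a 1) = castMA (Finsupp.single a (1 : ℤ)) from rfl,
        castMA_single_mul, mul_one]
      rfl

theorem pset_smul_single_support [DecidableEq G] (r : AddMonoidAlgebra ℤ ↥P) (a : G) :
    (r • castMA (Finsupp.single a 1)).coeff.support
      = r.coeff.support.image (fun p : ↥P => (p : G) + a) := by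
  rw [pset_smul_single]
  exact Finsupp.mapDomain_support_of_injective
    (fun p q h => Subtype.coe_injective (by exact add_right_cancel h)) r.coeff


theorem pset_single_smul_single (p : ↥P) (c : ℤ) (a : G) :
    castMA (Finsupp.single p c) • castMA (Finsupp.single a 1)
      = castMA (Finsupp.single ((p : G) + a) c) := by
  rw [pset_smul_def]
  have e : Finsupp.mapDomain (P.subtype) (castMA (Finsupp.single p c)).coeff
      = Finsupp.single ((p : G)) c := Finsupp.mapDomain_single
  rw [e]
  rw [castMA_single_mul, mul_one]

theorem monomialSpan_mono {A B : Set G} (h : A ⊆ B) :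
    monomialSpan P A ≤ monomialSpan P B :=
  Submodule.span_mono (Set.image_mono h)

theorem single_mem_monomialSpan {A : Set G} {a : G} (ha : a ∈ A) :
    castMA (Finsupp.single a 1) ∈ monomialSpan P A :=
  Submodule.subset_span ⟨a, ha, rfl⟩

theorem mem_monomialSpan_iff {A : Set G} (hA : IsSubPSet P A) (x : AddMonoidAlgebra ℤ G) :
    x ∈ monomialSpan P A ↔ ∀ g ∈ x.coeff.support, g ∈ A := by
  classical
  constructor
  · intro hx
    refine Submodule.span_induction (p := fun y _ => ∀ g ∈ y.coeff.support, g ∈ A)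
      ?_ ?_ ?_ ?_ hx
    · rintro y ⟨a, ha, rfl⟩ g hg
      have : g ∈ ({a} : Finset G) := Finsupp.support_single_subset hg
      rwa [Finset.mem_singleton.1 this]
    · intro g hg
      simp at hg
    · intro y z _ _ hy' hz' g hg
      rw [AddMonoidAlgebra.coeff_add] at hg
      rcases Finset.mem_union.1 (Finsupp.support_add hg) with h | h
      · exact hy' g h
      · exact hz' g h
    · intro r y _ hy' g hg
      rw [pset_smul_def] at hg
      have hmem := AddMonoidAlgebra.support_coeff_mul_subset
        (castMA (Finsupp.mapDomain (P.subtype) r.coeff)) y hg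
      rw [Finset.mem_add] at hmem
      obtain ⟨u, hu, v, hv, rfl⟩ := hmem
      have hu' : u ∈ r.coeff.support.image (P.subtype) := Finsupp.mapDomain_support hu
      obtain ⟨p, -, rfl⟩ := Finset.mem_image.1 hu'
      exact hA _ p.2 _ (hy' v hv)
  · intro h
    have hx : x = ∑ g ∈ x.coeff.support, castMA (Finsupp.single g (x.coeff g)) :=
      (AddMonoidAlgebra.sum_coeff_single x).symm.trans rfl
    rw [hx]
    refine Submodule.sum_mem _ fun g hg => ?_
    have : castMA (Finsupp.single g (x.coeff g))
        = castMA (Finsupp.single (0 : ↥P) (x.coeff g)) • castMA (Finsupp.single g 1) := by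
      rw [pset_single_smul_single]
      norm_num
    rw [this]
    exact Submodule.smul_mem _ _ (single_mem_monomialSpan P (h g hg))

theorem mem_monomialIdeal_iff {K : Set G} (hK : K ⊆ (P : Set G))
    (hKI : ∀ p ∈ P, ∀ k ∈ K, p + k ∈ K) (r : AddMonoidAlgebra ℤ ↥P) :
    r ∈ monomialIdeal P K ↔ ∀ p ∈ r.coeff.support, (p : G) ∈ K := by
  classical
  constructor
  · intro hr
    refine Submodule.span_induction (p := fun y _ => ∀ q : ↥P, q ∈ y.coeff.support → ((q : G) ∈ K))
      ?_ ?_ ?_ ?_ hr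
    · rintro y ⟨q, hq, rfl⟩ p hp
      have : p ∈ ({q} : Finset ↥P) := Finsupp.support_single_subset hp
      rwa [Finset.mem_singleton.1 this]
    · intro p hp
      simp at hp
    · intro y z _ _ hy' hz' p hp
      rw [AddMonoidAlgebra.coeff_add] at hp
      rcases Finset.mem_union.1 (Finsupp.support_add hp) with h | h
      · exact hy' p h
      · exact hz' p h
    · intro a y _ hy' p hp
      rw [smul_eq_mul] at hp
      have hmem := AddMonoidAlgebra.support_coeff_mul_subset a y hp
      rw [Finset.mem_add] at hmem
      obtain ⟨u, hu, v, hv, rfl⟩ := hmem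
      exact hKI _ u.2 _ (hy' v hv)
  · intro h
    have hx : r = ∑ p ∈ r.coeff.support, castMA (Finsupp.single p (r.coeff p)) :=
      (AddMonoidAlgebra.sum_coeff_single r).symm.trans rfl
    rw [hx]
    refine Submodule.sum_mem _ fun p hp => ?_
    have h1 : castMA (Finsupp.single p 1) ∈ monomialIdeal P K :=
      Submodule.subset_span ⟨p, h p hp, rfl⟩
    have h2 : castMA (Finsupp.single p (r.coeff p))
        = castMA (Finsupp.single (0 : ↥P) (r.coeff p)) * castMA (Finsupp.single p 1) := by
      rw [castMA_single_mul, zero_add, mul_one]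
    rw [h2]
    exact Ideal.mul_mem_left _ _ h1

theorem single_one_mem_monomialIdeal_iff {K : Set G} (hK : K ⊆ (P : Set G))
    (hKI : ∀ p ∈ P, ∀ k ∈ K, p + k ∈ K) (p : ↥P) :
    (AddMonoidAlgebra.single p 1 : AddMonoidAlgebra ℤ ↥P) ∈ monomialIdeal P K ↔ (p : G) ∈ K := by
  rw [mem_monomialIdeal_iff P hK hKI]
  constructor
  · intro h
    exact h p (by rw [AddMonoidAlgebra.coeff_single, Finsupp.support_single_ne_zero _ one_ne_zero]; exact Finset.mem_singleton_self p)
  · intro h q hq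
    have : q ∈ ({p} : Finset ↥P) := Finsupp.support_single_subset hq
    rwa [Finset.mem_singleton.1 this]

theorem monomialIdeal_mono {K K' : Set G} (h : K ⊆ K') :
    monomialIdeal P K ≤ monomialIdeal P K' :=
  Ideal.span_mono (Set.image_mono fun p hp => h hp)


theorem monomialSpan_union (C D : Set G) :
    monomialSpan P (C ∪ D) = monomialSpan P C ⊔ monomialSpan P D := by
  unfold monomialSpan
  rw [Set.image_union, Submodule.span_union]

variable (A B : Set G)

/-- The image in `(A)/(B)` of the monomial span of `C`. -/
noncomputable def MM (C : Set G) :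
    Submodule (AddMonoidAlgebra ℤ ↥P)
      (↥(monomialSpan P A) ⧸
        (Submodule.comap (monomialSpan P A).subtype (monomialSpan P B))) :=
  Submodule.map (Submodule.comap (monomialSpan P A).subtype (monomialSpan P B)).mkQ
    (Submodule.comap (monomialSpan P A).subtype (monomialSpan P C))

theorem MM_mono {C C' : Set G} (h : C ⊆ C') : MM P A B C ≤ MM P A B C' :=
  Submodule.map_mono (Submodule.comap_mono (monomialSpan_mono P h))

theorem MM_bot : MM P A B B = ⊥ := by
  refine (Submodule.eq_bot_iff _).2 ?_
  rintro _ ⟨z, hz, rfl⟩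
  rw [Submodule.mkQ_apply, Submodule.Quotient.mk_eq_zero]
  exact hz

theorem MM_top {C : Set G} (hAC : A ⊆ C) : MM P A B C = ⊤ := by
  have h1 : Submodule.comap (monomialSpan P A).subtype (monomialSpan P C) = ⊤ := by
    refine eq_top_iff.2 fun z _ => ?_
    exact monomialSpan_mono P hAC z.2
  rw [MM, h1, Submodule.map_top, Submodule.range_mkQ]

theorem mkQ_mem_MM_iff {C : Set G} (hBC : B ⊆ C) (z : ↥(monomialSpan P A)) :
    (Submodule.comap (monomialSpan P A).subtype (monomialSpan P B)).mkQ z ∈ MM P A B C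
      ↔ (z : AddMonoidAlgebra ℤ G) ∈ monomialSpan P C := by
  constructor
  · rintro ⟨w, hw, hwz⟩
    rw [Submodule.mkQ_apply, Submodule.mkQ_apply, Submodule.Quotient.eq] at hwz
    have h1 : ((w - z : ↥(monomialSpan P A)) : AddMonoidAlgebra ℤ G) ∈ monomialSpan P C :=
      monomialSpan_mono P hBC hwz
    have h2 : (w : AddMonoidAlgebra ℤ G) ∈ monomialSpan P C := hw
    have : (z : AddMonoidAlgebra ℤ G) = (w : AddMonoidAlgebra ℤ G)
        - ((w - z : ↥(monomialSpan P A)) : AddMonoidAlgebra ℤ G) := by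
      push_cast
      ring
    rw [this]
    exact Submodule.sub_mem _ h2 h1
  · intro hz
    exact Submodule.mem_map_of_mem hz


theorem monomialSpan_shift (x : G) :
    monomialSpan P ((fun g => g + x) '' (P : Set G))
      = Submodule.span (AddMonoidAlgebra ℤ ↥P) {castMA (Finsupp.single x 1)} := by
  apply le_antisymm
  · rw [monomialSpan, Submodule.span_le]
    rintro _ ⟨_, ⟨g, hg, rfl⟩, rfl⟩
    show castMA (Finsupp.single (g + x) 1) ∈ _
    have h1 : castMA (Finsupp.single (g + x) 1)
        = castMA (Finsupp.single (⟨g, hg⟩ : ↥P) (1:ℤ)) • castMA (Finsupp.single x 1) := by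
      rw [pset_single_smul_single]
    rw [h1]
    exact Submodule.smul_mem _ _ (Submodule.mem_span_singleton_self _)
  · rw [Submodule.span_singleton_le_iff_mem]
    exact single_mem_monomialSpan P ⟨0, P.zero_mem, zero_add x⟩

set_option maxHeartbeats 2000000 in
theorem step_lemma [IsNoetherianRing (AddMonoidAlgebra ℤ ↥P)]
    {A B C : Set G} (hA : IsSubPSet P A) (hC : IsSubPSet P C)
    (hBC : B ⊆ C) (hCA : C ⊆ A) (hAC : ¬ A ⊆ C) :
    ∃ C' K : Set G, IsSubPSet P C' ∧ B ⊆ C' ∧ C ⊆ C' ∧ C' ⊆ A ∧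
      MM P A B C < MM P A B C' ∧ IsMonoidPrime P K ∧
      Nonempty ((↥(MM P A B C') ⧸
          Submodule.comap (MM P A B C').subtype (MM P A B C))
        ≃ₗ[AddMonoidAlgebra ℤ ↥P]
        (AddMonoidAlgebra ℤ ↥P ⧸ monomialIdeal P K)) := by
  classical
  have hKsub : ∀ y : G, ((P : Set G) ∩ {g | g + y ∈ C}) ⊆ (P : Set G) :=
    fun y g hg => hg.1
  have hKideal : ∀ y : G, ∀ p ∈ P, ∀ k ∈ ((P : Set G) ∩ {g | g + y ∈ C}),
      p + k ∈ ((P : Set G) ∩ {g | g + y ∈ C}) := by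
    rintro y p hp k ⟨hkP, hkC⟩
    refine ⟨P.add_mem hp hkP, ?_⟩
    have := hC p hp _ hkC
    show p + k + y ∈ C
    rwa [add_assoc]
  -- pick a maximal annihilator ideal
  obtain ⟨a0, ha0⟩ := Set.not_subset.1 hAC
  have hmax := (set_has_maximal_iff_noetherian.2 (inferInstance :
      IsNoetherian (AddMonoidAlgebra ℤ ↥P) (AddMonoidAlgebra ℤ ↥P)))
    {I : Ideal (AddMonoidAlgebra ℤ ↥P) | ∃ y, (y ∈ A ∧ y ∉ C) ∧
      I = monomialIdeal P ((P : Set G) ∩ {g | g + y ∈ C})}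
    ⟨monomialIdeal P ((P : Set G) ∩ {g | g + a0 ∈ C}), a0, ha0, rfl⟩
  obtain ⟨I, ⟨x, ⟨hxA, hxC⟩, rfl⟩, hImax⟩ := hmax
  -- basic facts about C' := C ∪ (P + x)
  have hC' : IsSubPSet P (C ∪ (fun g => g + x) '' (P : Set G)) := by
    rintro p hp c (hc | ⟨g, hg, rfl⟩)
    · exact Or.inl (hC p hp c hc)
    · exact Or.inr ⟨p + g, P.add_mem hp hg, add_assoc p g x⟩
  have hxC' : x ∈ C ∪ (fun g => g + x) '' (P : Set G) :=
    Or.inr ⟨0, P.zero_mem, zero_add x⟩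
  have hBC' : B ⊆ C ∪ (fun g => g + x) '' (P : Set G) := fun b hb => Or.inl (hBC hb)
  have hCC' : C ⊆ C ∪ (fun g => g + x) '' (P : Set G) := Set.subset_union_left
  have hC'A : (C ∪ (fun g => g + x) '' (P : Set G)) ⊆ A := by
    rintro c (hc | ⟨g, hg, rfl⟩)
    · exact hCA hc
    · exact hA g hg x hxA
  -- K is a monoid prime
  have hKprime : IsMonoidPrime P ((P : Set G) ∩ {g | g + x ∈ C}) := by
    refine ⟨hKsub x, hKideal x, ?_, ?_⟩
    · intro h
      have h0 : (0 : G) ∈ ((P : Set G) ∩ {g | g + x ∈ C}) := by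
        rw [h]
        exact P.zero_mem
      exact hxC (by simpa using h0.2)
    · intro p hp q hq hpq
      by_contra hcon
      push_neg at hcon
      obtain ⟨hp', hq'⟩ := hcon
      have hx'A : p + x ∈ A := hA p hp x hxA
      have hx'C : p + x ∉ C := fun h => hp' ⟨hp, h⟩
      have hKle : ((P : Set G) ∩ {g | g + x ∈ C})
          ⊆ ((P : Set G) ∩ {g | g + (p + x) ∈ C}) := by
        rintro k ⟨hkP, hkC⟩
        refine ⟨hkP, ?_⟩
        show k + (p + x) ∈ C
        rw [add_left_comm]
        exact hC p hp _ hkC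
      have hqK' : q ∈ ((P : Set G) ∩ {g | g + (p + x) ∈ C}) := by
        refine ⟨hq, ?_⟩
        show q + (p + x) ∈ C
        rw [← add_assoc, add_comm q p]
        exact hpq.2
      have hlt : monomialIdeal P ((P : Set G) ∩ {g | g + x ∈ C})
          < monomialIdeal P ((P : Set G) ∩ {g | g + (p + x) ∈ C}) := by
        refine lt_of_le_of_ne (monomialIdeal_mono P hKle) ?_
        intro heq
        have h1 : castMA (Finsupp.single (⟨q, hq⟩ : ↥P) (1:ℤ))
            ∈ monomialIdeal P ((P : Set G) ∩ {g | g + (p + x) ∈ C}) :=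
          (single_one_mem_monomialIdeal_iff P (hKsub _) (hKideal _) _).2 hqK'
        rw [← heq] at h1
        have h2 := (single_one_mem_monomialIdeal_iff P (hKsub x) (hKideal x) _).1 h1
        exact hq' h2
      exact hImax _ ⟨p + x, ⟨hx'A, hx'C⟩, rfl⟩ hlt
  -- the distinguished element and the evaluation map
  have hxA' : castMA (Finsupp.single x 1) ∈ monomialSpan P A :=
    single_mem_monomialSpan P hxA
  set ea : ↥(monomialSpan P A) := ⟨castMA (Finsupp.single x 1), hxA'⟩ with hea
  set QB := Submodule.comap (monomialSpan P A).subtype (monomialSpan P B) with hQB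
  set φ := LinearMap.toSpanSingleton (AddMonoidAlgebra ℤ ↥P)
    (↥(monomialSpan P A) ⧸ QB) (QB.mkQ ea) with hφdef
  have hφ : ∀ r, φ r = QB.mkQ (r • ea) := by
    intro r
    rw [hφdef, LinearMap.toSpanSingleton_apply, map_smul]
  have hval : ∀ r : AddMonoidAlgebra ℤ ↥P,
      ((r • ea : ↥(monomialSpan P A)) : AddMonoidAlgebra ℤ G)
        = r • castMA (Finsupp.single x 1) := fun r => rfl
  have hφmem : ∀ r, φ r ∈ MM P A B (C ∪ (fun g => g + x) '' (P : Set G)) := by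
    intro r
    rw [hφ r]
    rw [mkQ_mem_MM_iff P A B hBC']
    rw [hval, mem_monomialSpan_iff P hC']
    intro g hg
    rw [pset_smul_single_support] at hg
    obtain ⟨p, hp, rfl⟩ := Finset.mem_image.1 hg
    exact Or.inr ⟨↑p, p.2, rfl⟩
  have hkey : ∀ r, (φ r ∈ MM P A B C
      ↔ r ∈ monomialIdeal P ((P : Set G) ∩ {g | g + x ∈ C})) := by
    intro r
    rw [hφ r, mkQ_mem_MM_iff P A B hBC, hval, mem_monomialSpan_iff P hC,
      mem_monomialIdeal_iff P (hKsub x) (hKideal x)]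
    rw [pset_smul_single_support]
    constructor
    · intro h p hp
      exact ⟨p.2, h _ (Finset.mem_image_of_mem _ hp)⟩
    · intro h g hg
      obtain ⟨p, hp, rfl⟩ := Finset.mem_image.1 hg
      exact (h p hp).2
  -- strictness
  have hstrict : MM P A B C < MM P A B (C ∪ (fun g => g + x) '' (P : Set G)) := by
    refine lt_of_le_of_ne (MM_mono P A B hCC') ?_
    intro heq
    have h1 : QB.mkQ ea ∈ MM P A B (C ∪ (fun g => g + x) '' (P : Set G)) := by
      rw [mkQ_mem_MM_iff P A B hBC']
      exact single_mem_monomialSpan P hxC'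
    rw [← heq, mkQ_mem_MM_iff P A B hBC, mem_monomialSpan_iff P hC] at h1
    refine hxC (h1 x ?_)
    show x ∈ (Finsupp.single x (1:ℤ)).support
    rw [Finsupp.support_single_ne_zero _ one_ne_zero]
    exact Finset.mem_singleton_self x
  -- the quotient map and its properties
  set MC' := MM P A B (C ∪ (fun g => g + x) '' (P : Set G)) with hMC'
  set ψ := (Submodule.comap MC'.subtype (MM P A B C)).mkQ.comp
    (φ.codRestrict MC' hφmem) with hψdef
  have hker : LinearMap.ker ψ = monomialIdeal P ((P : Set G) ∩ {g | g + x ∈ C}) := by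
    ext r
    rw [LinearMap.mem_ker, hψdef, LinearMap.comp_apply, Submodule.mkQ_apply,
      Submodule.Quotient.mk_eq_zero, Submodule.mem_comap, Submodule.subtype_apply,
      LinearMap.codRestrict_apply]
    exact hkey r
  have hsurj : Function.Surjective ψ := by
    intro yq
    obtain ⟨z, rfl⟩ := Submodule.Quotient.mk_surjective _ yq
    obtain ⟨w, hw, hwz⟩ := Submodule.mem_map.1 z.2
    have hw' : (w : AddMonoidAlgebra ℤ G) ∈
        monomialSpan P (C ∪ (fun g => g + x) '' (P : Set G)) := hw
    rw [monomialSpan_union, monomialSpan_shift] at hw'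
    obtain ⟨u, hu, v, hv, huv⟩ := Submodule.mem_sup.1 hw'
    obtain ⟨r, rfl⟩ := Submodule.mem_span_singleton.1 hv
    refine ⟨r, ?_⟩
    rw [hψdef, LinearMap.comp_apply, Submodule.mkQ_apply, Submodule.Quotient.eq,
      Submodule.mem_comap]
    have h1 : MC'.subtype ((φ.codRestrict MC' hφmem) r - z)
        = QB.mkQ ((r • ea) - w) := by
      rw [map_sub, map_sub, Submodule.subtype_apply, LinearMap.codRestrict_apply,
        hφ r, hwz]
      rfl
    rw [h1, mkQ_mem_MM_iff P A B hBC]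
    have h2 : (((r • ea) - w : ↥(monomialSpan P A)) : AddMonoidAlgebra ℤ G) = -u := by
      rw [Submodule.coe_sub, hval r, ← huv]
      abel
    rw [h2]
    exact Submodule.neg_mem _ hu
  exact ⟨C ∪ (fun g => g + x) '' (P : Set G), (P : Set G) ∩ {g | g + x ∈ C},
    hC', hBC', hCC', hC'A, hstrict, hKprime,
    ⟨((Submodule.quotEquivOfEq _ _ hker.symm).trans
      (ψ.quotKerEquivOfSurjective hsurj)).symm⟩⟩


set_option maxHeartbeats 2000000 in
theorem filtration_aux [IsNoetherianRing (AddMonoidAlgebra ℤ ↥P)]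
    {A B : Set G} (hA : IsSubPSet P A) (hB : IsSubPSet P B) (hBA : B ⊆ A)
    [IsNoetherian (AddMonoidAlgebra ℤ ↥P)
      (↥(monomialSpan P A) ⧸
        (Submodule.comap (monomialSpan P A).subtype (monomialSpan P B)))] :
    ∀ (M : Submodule (AddMonoidAlgebra ℤ ↥P)
        (↥(monomialSpan P A) ⧸
          (Submodule.comap (monomialSpan P A).subtype (monomialSpan P B)))),
      ∀ C : Set G, IsSubPSet P C → B ⊆ C → C ⊆ A → MM P A B C = M →
      ∃ (n : ℕ) (f : Fin (n + 1) → Submodule (AddMonoidAlgebra ℤ ↥P)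
          (↥(monomialSpan P A) ⧸
            (Submodule.comap (monomialSpan P A).subtype (monomialSpan P B)))),
        Monotone f ∧ f 0 = MM P A B C ∧ f (Fin.last n) = ⊤ ∧
        ∀ i : Fin n, ∃ K : Set G, IsMonoidPrime P K ∧
          Nonempty ((↥(f i.succ) ⧸ (Submodule.comap (f i.succ).subtype (f i.castSucc)))
            ≃ₗ[AddMonoidAlgebra ℤ ↥P]
            (AddMonoidAlgebra ℤ ↥P ⧸ monomialIdeal P K)) := by
  intro M
  induction M using IsNoetherian.induction with
  | _ M ih =>
    intro C hC hBC hCA hMC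
    by_cases hAC : A ⊆ C
    · exact ⟨0, fun _ => MM P A B C, monotone_const, rfl,
        MM_top P A B hAC, fun i => i.elim0⟩
    · obtain ⟨C', K, hC', hBC', hCC', hC'A, hlt, hKp, hiso⟩ :=
        step_lemma P hA hC hBC hCA hAC
      obtain ⟨n, f, hmono, hf0, hlast, hquot⟩ :=
        ih (MM P A B C') (hMC ▸ hlt) C' hC' hBC' hC'A rfl
      refine ⟨n + 1, Fin.cons (MM P A B C) f, ?_, ?_, ?_, ?_⟩
      · rw [Fin.monotone_iff_le_succ]
        intro i
        refine Fin.cases ?_ ?_ i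
        · rw [show Fin.castSucc (0 : Fin (n + 1)) = 0 from rfl, Fin.cons_zero,
            Fin.cons_succ, hf0]
          exact le_of_lt hlt
        · intro j
          rw [← Fin.succ_castSucc, Fin.cons_succ, Fin.cons_succ]
          exact hmono (le_of_lt (Fin.castSucc_lt_succ (i := j)))
      · rw [Fin.cons_zero]
      · rw [← Fin.succ_last, Fin.cons_succ]
        exact hlast
      · intro i
        refine Fin.cases ?_ ?_ i
        · obtain ⟨e⟩ := hiso
          refine ⟨K, hKp, ?_⟩
          have h1 : (Fin.cons (MM P A B C) f : Fin (n + 2) → _) (Fin.succ 0)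
              = MM P A B C' := by rw [Fin.cons_succ, hf0]
          have h2 : (Fin.cons (MM P A B C) f : Fin (n + 2) → _) (Fin.castSucc 0)
              = MM P A B C := by
            rw [show Fin.castSucc (0 : Fin (n + 1)) = 0 from rfl, Fin.cons_zero]
          rw [h1, h2]
          exact ⟨e⟩
        · intro j
          obtain ⟨K', hK', hiso'⟩ := hquot j
          refine ⟨K', hK', ?_⟩
          have h1 : (Fin.cons (MM P A B C) f : Fin (n + 2) → _) (Fin.succ (Fin.succ j))
              = f (Fin.succ j) := by rw [Fin.cons_succ]
          have h2 : (Fin.cons (MM P A B C) f : Fin (n + 2) → _) (Fin.castSucc (Fin.succ j))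
              = f (Fin.castSucc j) := by rw [← Fin.succ_castSucc, Fin.cons_succ]
          rw [h1, h2]
          exact hiso'

end Aux

/-- If `P` is a finitely generated torsion-free commutative cancellative monoid (realized
as a submonoid of its Grothendieck group `G`) and `N = (A)/(B)` is a finitely generated
combinatorial `ℤ[P]`-module, then `N` has a filtration `0 = N₀ ⊂ ⋯ ⊂ N_n = N` with each
`Nᵢ/Nᵢ₋₁ ≅ ℤ[P]/(K)` for some prime ideal `K ⊂ P`. -/
theorem combinatorial_module_prime_filtration {G : Type*} [AddCommGroup G]
    (P : AddSubmonoid G) (hfg : P.FG)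
    (hgen : ∀ g : G, ∃ p ∈ P, ∃ q ∈ P, g = p - q)
    (htf : ∀ (n : ℕ) (g : G), 0 < n → n • g = 0 → g = 0)
    (A B : Set G) (hA : IsSubPSet P A) (hB : IsSubPSet P B) (hBA : B ⊆ A)
    (hfin : Module.Finite (AddMonoidAlgebra ℤ ↥P)
      (↥(monomialSpan P A) ⧸
        (Submodule.comap (monomialSpan P A).subtype (monomialSpan P B)))) :
    ∃ (n : ℕ) (N : Fin (n + 1) → Submodule (AddMonoidAlgebra ℤ ↥P)
        (↥(monomialSpan P A) ⧸
          (Submodule.comap (monomialSpan P A).subtype (monomialSpan P B)))),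
      Monotone N ∧ N 0 = ⊥ ∧ N (Fin.last n) = ⊤ ∧
      ∀ i : Fin n, ∃ K : Set G, IsMonoidPrime P K ∧
        Nonempty ((↥(N i.succ) ⧸ (Submodule.comap (N i.succ).subtype (N i.castSucc)))
          ≃ₗ[AddMonoidAlgebra ℤ ↥P]
          (AddMonoidAlgebra ℤ ↥P ⧸ monomialIdeal P K)) := by
  haveI hPfg : AddMonoid.FG ↥P := (AddMonoid.fg_iff_addSubmonoid_fg P).2 hfg
  haveI : IsNoetherianRing (AddMonoidAlgebra ℤ ↥P) :=
    Algebra.FiniteType.isNoetherianRing ℤ _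
  haveI := hfin
  haveI : IsNoetherian (AddMonoidAlgebra ℤ ↥P)
      (↥(monomialSpan P A) ⧸
        (Submodule.comap (monomialSpan P A).subtype (monomialSpan P B))) :=
    isNoetherian_of_isNoetherianRing_of_finite _ _
  obtain ⟨n, f, hmono, hf0, hlast, hquot⟩ :=
    filtration_aux P hA hB hBA (MM P A B B) B hB subset_rfl hBA rfl
  exact ⟨n, f, hmono, by rw [hf0, MM_bot], hlast, hquot⟩
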